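/- Let G be a finite p-group acting on V over a field k of characteristic p, let 𝒳 be a set of proper subgroups of G, and let I^G_𝒳 = Σ_{X∈𝒳} Tr^G_X(k[V]^X) be the associated transfer ideal of k[V]^G. Let x_1 be a dual basis variable corresponding to a nonzero G-fixed basis vector and N_1 = Π_{σ∈G} σ·x_1 its norm. Then the image of N_1 in R = k[V]^G / I^G_𝒳 is a regular element (a non-zerodivisor) of R. -/

import Mathlib

open MvPolynomial

set_option linter.unusedSectionVars false
set_option maxHeartbeats 1000000

/-- The ring of `H`-invariants in `R`. -/
def invSub (G R : Type) [Group G] [CommRing R] [MulSemiringAction G R]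
    (H : Subgroup G) : Subring R where
  carrier := {f : R | ∀ h : H, (h : G) • f = f}
  mul_mem' := fun ha hb h => by rw [smul_mul', ha h, hb h]
  one_mem' := fun h => smul_one _
  add_mem' := fun ha hb h => by rw [smul_add, ha h, hb h]
  zero_mem' := fun h => smul_zero _
  neg_mem' := fun ha h => by rw [smul_neg, (ha h : _)]

/-- The relative transfer `Tr^H_K`, summing over representatives of `H/K`. -/
noncomputable def relTransfer (G R : Type) [Group G] [Finite G] [CommRing R]
    [MulSemiringAction G R] (H K : Subgroup G) (f : R) : R :=
  haveI : Fintype (H ⧸ K.subgroupOf H) := Fintype.ofFinite _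
  ∑ c : H ⧸ K.subgroupOf H, ((Quotient.out c : H) : G) • f

/-- The transfer ideal `I^G_𝒳 = Σ_{X ∈ 𝒳} Tr^G_X(k[V]^X)` of `k[V]^G`. -/
noncomputable def transferIdealFamily (G R : Type) [Group G] [Finite G] [CommRing R]
    [MulSemiringAction G R] (𝓧 : Set (Subgroup G)) : Ideal (invSub G R ⊤) :=
  Ideal.span {y | ∃ X ∈ 𝓧, ∃ f : R, (∀ x : X, (x : G) • f = f) ∧
    (y : R) = relTransfer G R ⊤ X f}

/-- The norm `N₁ = Π_{σ∈G} σ·x₁`, as an element of `k[V]^G`. -/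
noncomputable def normElt (k : Type) [Field k] (n : ℕ) (G : Type) [Group G] [Fintype G]
    [MulSemiringAction G (MvPolynomial (Fin n) k)] (i : Fin n) :
    invSub G (MvPolynomial (Fin n) k) ⊤ :=
  ⟨∏ σ : G, σ • (X i : MvPolynomial (Fin n) k), by
    intro τ
    have h1 : (τ : G) • (∏ σ : G, σ • (X i : MvPolynomial (Fin n) k)) =
        ∏ σ : G, (τ : G) • σ • (X i : MvPolynomial (Fin n) k) :=
      map_prod (MulSemiringAction.toRingHom G _ (τ : G)) _ _
    rw [h1]
    exact Fintype.prod_equiv (Equiv.mulLeft (τ : G)) _ _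
      (fun σ => (mul_smul (τ : G) σ _).symm)⟩

section Aux

variable {k : Type} [Field k] {m : ℕ} {G : Type} [Group G] [Fintype G]
  [MulSemiringAction G (MvPolynomial (Fin (m+1)) k)]
  [SMulCommClass G k (MvPolynomial (Fin (m+1)) k)]

private lemma degree_cons {m : ℕ} (i : ℕ) (d : Fin m →₀ ℕ) :
    (Finsupp.cons i d).degree = i + d.degree := by
  simp [Finsupp.degree_eq_weight_one, Finsupp.weight_apply, Finsupp.sum_cons]

private lemma smul_C' (g : G) (c : k) : g • (C c : MvPolynomial (Fin (m+1)) k) = C c := by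
  have : (C c : MvPolynomial (Fin (m+1)) k) = c • 1 := by
    rw [MvPolynomial.smul_eq_C_mul, mul_one]
  rw [this, smul_comm, smul_one]

private lemma phi_lin (p : MvPolynomial (Fin (m+1)) k) (hp : p.IsHomogeneous 1) :
    finSuccEquiv k m p =
      Polynomial.C (MvPolynomial.C (coeff (Finsupp.single 0 1) p)) * Polynomial.X
      + Polynomial.C ((finSuccEquiv k m p).coeff 0) := by
  have hdeg : (finSuccEquiv k m p).degree ≤ 1 := by
    rw [Polynomial.degree_le_iff_coeff_zero]
    intro d hd
    have hd' : 1 < d := by exact_mod_cast hd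
    ext w
    rw [finSuccEquiv_coeff_coeff, MvPolynomial.coeff_zero]
    apply hp.coeff_eq_zero
    rw [degree_cons]; omega
  have hcons : (Finsupp.cons 1 (0 : Fin m →₀ ℕ)) = Finsupp.single (0 : Fin (m+1)) 1 := by
    ext i
    refine Fin.cases ?_ (fun j => ?_) i
    · rw [Finsupp.cons_zero, Finsupp.single_eq_same]
    · rw [Finsupp.cons_succ, Finsupp.single_eq_of_ne' (Fin.succ_ne_zero j).symm]
      rfl
  have hc1 : (finSuccEquiv k m p).coeff 1 = MvPolynomial.C (coeff (Finsupp.single 0 1) p) := by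
    ext w
    rw [finSuccEquiv_coeff_coeff, MvPolynomial.coeff_C]
    by_cases hw : w = 0
    · subst hw
      rw [if_pos rfl, hcons]
    · rw [if_neg (Ne.symm hw)]
      apply hp.coeff_eq_zero
      rw [degree_cons]
      have : w.degree ≠ 0 := fun h => hw ((Finsupp.degree_eq_zero_iff w).mp h)
      omega
  conv_lhs => rw [Polynomial.eq_X_add_C_of_degree_le_one hdeg]
  rw [hc1]

private lemma key0 (g : G)
    (hX : ∀ j : Fin m, ∃ b, finSuccEquiv k m (g • (X j.succ : MvPolynomial (Fin (m+1)) k))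
      = Polynomial.C b) (a : MvPolynomial (Fin m) k) :
    ∃ b, finSuccEquiv k m (g • (finSuccEquiv k m).symm (Polynomial.C a)) = Polynomial.C b := by
  induction a using MvPolynomial.induction_on with
  | C c =>
      refine ⟨C c, ?_⟩
      have h1 : ((finSuccEquiv k m).symm (Polynomial.C (C c)) : MvPolynomial (Fin (m+1)) k)
          = C c := by
        apply (finSuccEquiv k m).injective
        rw [AlgEquiv.apply_symm_apply, finSuccEquiv_apply]
        simp
      rw [h1, smul_C' g c, finSuccEquiv_apply]
      simp
  | add p q hp hq =>
      obtain ⟨bp, hbp⟩ := hp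
      obtain ⟨bq, hbq⟩ := hq
      refine ⟨bp + bq, ?_⟩
      rw [map_add, map_add, smul_add, map_add, hbp, hbq, map_add]
  | mul_X p j hp =>
      obtain ⟨bp, hbp⟩ := hp
      obtain ⟨bj, hbj⟩ := hX j
      refine ⟨bp * bj, ?_⟩
      have h2 : ((finSuccEquiv k m).symm (Polynomial.C (p * X j)) : MvPolynomial (Fin (m+1)) k)
          = (finSuccEquiv k m).symm (Polynomial.C p) * X j.succ := by
        apply (finSuccEquiv k m).injective
        rw [AlgEquiv.apply_symm_apply, map_mul, map_mul, AlgEquiv.apply_symm_apply,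
          finSuccEquiv_X_succ]
      rw [h2, smul_mul', map_mul, hbp, hbj, map_mul]

private lemma smul_constCase (g : G)
    (hX : ∀ j : Fin m, ∃ b, finSuccEquiv k m (g • (X j.succ : MvPolynomial (Fin (m+1)) k))
      = Polynomial.C b)
    (r : MvPolynomial (Fin (m+1)) k) (hr : ∃ b, finSuccEquiv k m r = Polynomial.C b) :
    ∃ b, finSuccEquiv k m (g • r) = Polynomial.C b := by
  obtain ⟨b, hb⟩ := hr
  have : r = (finSuccEquiv k m).symm (Polynomial.C b) := by
    rw [← hb, AlgEquiv.symm_apply_apply]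
  rw [this]
  exact key0 g hX b

private lemma degree_smul_le (g : G)
    (hX0 : ∃ b, finSuccEquiv k m (g • (X 0 : MvPolynomial (Fin (m+1)) k))
      = Polynomial.X + Polynomial.C b)
    (hXs : ∀ j : Fin m, ∃ b, finSuccEquiv k m (g • (X j.succ : MvPolynomial (Fin (m+1)) k))
      = Polynomial.C b)
    (h : MvPolynomial (Fin (m+1)) k) :
    (finSuccEquiv k m (g • h)).degree ≤ (finSuccEquiv k m h).degree := by
  obtain ⟨b0, hb0⟩ := hX0
  set P := finSuccEquiv k m h with hPdef
  have hh : h = (finSuccEquiv k m).symm P := ((finSuccEquiv k m).symm_apply_apply h).symm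
  rw [hh]
  have key : ∀ (d : ℕ) (c : MvPolynomial (Fin m) k),
      (finSuccEquiv k m (g • (finSuccEquiv k m).symm (Polynomial.monomial d c))).degree
        ≤ (d : WithBot ℕ) := by
    intro d c
    have hmono : ((finSuccEquiv k m).symm (Polynomial.monomial d c)
        : MvPolynomial (Fin (m+1)) k)
        = (finSuccEquiv k m).symm (Polynomial.C c) * (X 0)^d := by
      apply (finSuccEquiv k m).injective
      rw [AlgEquiv.apply_symm_apply, map_mul, AlgEquiv.apply_symm_apply, map_pow,
        finSuccEquiv_X_zero, Polynomial.C_mul_X_pow_eq_monomial]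
    rw [hmono, smul_mul', map_mul]
    have h1 : (finSuccEquiv k m (g • (finSuccEquiv k m).symm (Polynomial.C c))).degree ≤ 0 := by
      obtain ⟨b, hb⟩ := key0 g hXs c
      rw [hb]; exact Polynomial.degree_C_le
    have h2 : (finSuccEquiv k m (g • ((X 0 : MvPolynomial (Fin (m+1)) k))^d)).degree
        ≤ (d : WithBot ℕ) := by
      have hpow : g • ((X 0 : MvPolynomial (Fin (m+1)) k))^d
          = (g • (X 0 : MvPolynomial (Fin (m+1)) k))^d :=
        map_pow (MulSemiringAction.toRingHom G (MvPolynomial (Fin (m+1)) k) g) _ d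
      rw [hpow, map_pow, hb0]
      refine le_trans (Polynomial.degree_pow_le _ _) ?_
      rw [Polynomial.degree_X_add_C b0]
      simp
    calc (finSuccEquiv k m (g • (finSuccEquiv k m).symm (Polynomial.C c))
            * finSuccEquiv k m (g • ((X 0 : MvPolynomial (Fin (m+1)) k))^d)).degree
        ≤ _ + _ := Polynomial.degree_mul_le _ _
      _ ≤ 0 + (d : WithBot ℕ) := add_le_add h1 h2
      _ = (d : WithBot ℕ) := zero_add _
  conv_lhs => rw [P.as_sum_support]
  rw [map_sum, Finset.smul_sum, map_sum]
  refine le_trans (Polynomial.degree_sum_le _ _) ?_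
  refine Finset.sup_le fun d hd => le_trans (key d _) ?_
  exact Polynomial.le_degree_of_ne_zero (Polynomial.mem_support_iff.mp hd)

end Aux

section Transfer
variable {G R₀ : Type} [Group G] [Finite G] [CommRing R₀] [MulSemiringAction G R₀]

private lemma relTransfer_smul_invariant (X : Subgroup G) (u : R₀)
    (hu : ∀ x : X, (x : G) • u = u) (τ : G) :
    τ • relTransfer G R₀ ⊤ X u = relTransfer G R₀ ⊤ X u := by
  letI : Fintype ((⊤ : Subgroup G) ⧸ X.subgroupOf ⊤) := Fintype.ofFinite _
  unfold relTransfer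
  rw [Finset.smul_sum]
  set τ' : (⊤ : Subgroup G) := ⟨τ, Subgroup.mem_top τ⟩
  refine Fintype.sum_bijective (fun c => τ' • c) (MulAction.bijective τ') _ _ fun c => ?_
  set σ : (⊤ : Subgroup G) := Quotient.out c
  set σ' : (⊤ : Subgroup G) := Quotient.out (τ' • c)
  have h1 : (QuotientGroup.mk (τ' * σ) : (⊤ : Subgroup G) ⧸ X.subgroupOf ⊤) = τ' • c := by
    have : (QuotientGroup.mk σ : (⊤ : Subgroup G) ⧸ X.subgroupOf ⊤) = c := Quotient.out_eq c
    rw [← this]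
    rfl
  have h2 : (QuotientGroup.mk σ' : (⊤ : Subgroup G) ⧸ X.subgroupOf ⊤) = τ' • c :=
    Quotient.out_eq _
  have h3 : σ'⁻¹ * (τ' * σ) ∈ X.subgroupOf ⊤ := QuotientGroup.eq.mp (h2.trans h1.symm)
  have h4 : (↑(σ'⁻¹ * (τ' * σ)) : G) ∈ X := Subgroup.mem_subgroupOf.mp h3
  have h5 : τ' * σ = σ' * (σ'⁻¹ * (τ' * σ)) := by group
  calc τ • (σ : G) • u = ((τ' * σ : (⊤ : Subgroup G)) : G) • u := by
        rw [Subgroup.coe_mul, mul_smul]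
    _ = ((σ' * (σ'⁻¹ * (τ' * σ)) : (⊤ : Subgroup G)) : G) • u := by rw [← h5]
    _ = (σ' : G) • ((↑(σ'⁻¹ * (τ' * σ)) : G) • u) := by rw [Subgroup.coe_mul, mul_smul]
    _ = (σ' : G) • u := by rw [hu ⟨_, h4⟩]

private lemma relTransfer_mul_invariant (X : Subgroup G) (c f : R₀)
    (hc : ∀ g : G, g • c = c) :
    relTransfer G R₀ ⊤ X (c * f) = c * relTransfer G R₀ ⊤ X f := by
  letI : Fintype ((⊤ : Subgroup G) ⧸ X.subgroupOf ⊤) := Fintype.ofFinite _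
  unfold relTransfer
  rw [Finset.mul_sum]
  refine Finset.sum_congr rfl fun q _ => ?_
  rw [smul_mul', hc]

private lemma relTransfer_add (X : Subgroup G) (f g : R₀) :
    relTransfer G R₀ ⊤ X (f + g) = relTransfer G R₀ ⊤ X f + relTransfer G R₀ ⊤ X g := by
  letI : Fintype ((⊤ : Subgroup G) ⧸ X.subgroupOf ⊤) := Fintype.ofFinite _
  unfold relTransfer
  rw [← Finset.sum_add_distrib]
  exact Finset.sum_congr rfl fun q _ => smul_add _ _ _

end Transfer

section Transfer3
variable {k : Type} [Field k] {m : ℕ} {G : Type} [Group G] [Fintype G]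
  [MulSemiringAction G (MvPolynomial (Fin (m+1)) k)]

private lemma relTransfer_degree_lt (X : Subgroup G) (r : MvPolynomial (Fin (m+1)) k) (D : ℕ)
    (hr : ∀ g : G, (finSuccEquiv k m (g • r)).degree < (D : WithBot ℕ)) :
    (finSuccEquiv k m (relTransfer G (MvPolynomial (Fin (m+1)) k) ⊤ X r)).degree
      < (D : WithBot ℕ) := by
  letI : Fintype ((⊤ : Subgroup G) ⧸ X.subgroupOf ⊤) := Fintype.ofFinite _
  unfold relTransfer
  rw [map_sum]
  refine lt_of_le_of_lt (Polynomial.degree_sum_le _ _) ?_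
  rw [Finset.sup_lt_iff (by exact WithBot.bot_lt_coe D)]
  exact fun q _ => hr _

end Transfer3

/-- for a `p`-group `G` in characteristic `p` and a set `𝒳` of proper
subgroups of `G`, the image of the norm `N₁` of a dual variable of a fixed basis
vector is a non-zerodivisor in `k[V]^G / I^G_𝒳`. -/
theorem normElt_regular_mod_transferIdeal
    (k : Type) [Field k] (p : ℕ) [Fact p.Prime] [CharP k p]
    (G : Type) [Group G] [Fintype G] (hG : IsPGroup p G)
    (n : ℕ) (hn : 0 < n)
    [MulSemiringAction G (MvPolynomial (Fin n) k)]
    [SMulCommClass G k (MvPolynomial (Fin n) k)]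
    -- the action of `G` on `k[V]` is induced by a linear action on `V`:
    (hlin : ∀ (σ : G) (i : Fin n), (σ • (X i : MvPolynomial (Fin n) k)).IsHomogeneous 1)
    -- `v₁` is a `G`-fixed basis vector with dual variable `x₁`:
    (hfix : ∀ (σ : G) (i : Fin n),
      coeff (Finsupp.single (⟨0, hn⟩ : Fin n) 1) (σ • (X i : MvPolynomial (Fin n) k)) =
        if i = ⟨0, hn⟩ then 1 else 0)
    (𝓧 : Set (Subgroup G)) (h𝓧 : ∀ X ∈ 𝓧, X ≠ ⊤) :
    Ideal.Quotient.mk (transferIdealFamily G (MvPolynomial (Fin n) k) 𝓧)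
        (normElt k n G ⟨0, hn⟩) ∈
      nonZeroDivisors ((invSub G (MvPolynomial (Fin n) k) ⊤) ⧸
        transferIdealFamily G (MvPolynomial (Fin n) k) 𝓧) := by
  obtain ⟨m, rfl⟩ : ∃ m, n = m + 1 := ⟨n - 1, by omega⟩
  have h0 : (⟨0, hn⟩ : Fin (m+1)) = 0 := rfl
  -- basic structure of the action on variables
  have hX0 : ∀ σ : G, ∃ b, finSuccEquiv k m (σ • (X 0 : MvPolynomial (Fin (m+1)) k))
      = Polynomial.X + Polynomial.C b := by
    intro σ
    have h1 := hlin σ ⟨0, hn⟩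
    have h2 := hfix σ ⟨0, hn⟩
    rw [h0] at h1 h2
    rw [if_pos rfl] at h2
    have h3 := phi_lin (σ • (X 0 : MvPolynomial (Fin (m+1)) k)) h1
    rw [h2, MvPolynomial.C_1, Polynomial.C_1, one_mul] at h3
    exact ⟨_, h3⟩
  have hXs : ∀ (σ : G) (j : Fin m), ∃ b,
      finSuccEquiv k m (σ • (X j.succ : MvPolynomial (Fin (m+1)) k)) = Polynomial.C b := by
    intro σ j
    have h1 := hlin σ j.succ
    have h2 := hfix σ j.succ
    rw [h0] at h2
    rw [if_neg (Fin.succ_ne_zero j)] at h2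
    have h3 := phi_lin (σ • (X j.succ : MvPolynomial (Fin (m+1)) k)) h1
    rw [h2, MvPolynomial.C_0, Polynomial.C_0, zero_mul, zero_add] at h3
    exact ⟨_, h3⟩
  have hdegle : ∀ (g : G) (h : MvPolynomial (Fin (m+1)) k),
      (finSuccEquiv k m (g • h)).degree ≤ (finSuccEquiv k m h).degree :=
    fun g h => degree_smul_le g (hX0 g) (hXs g) h
  -- the norm
  set Nv : MvPolynomial (Fin (m+1)) k := (normElt k (m+1) G ⟨0, hn⟩ : MvPolynomial (Fin (m+1)) k)
    with hNv
  have hNinv : ∀ g : G, g • Nv = Nv :=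
    fun g => (normElt k (m+1) G ⟨0, hn⟩).2 ⟨g, Subgroup.mem_top g⟩
  have hNvdef : Nv = ∏ σ : G, σ • (X 0 : MvPolynomial (Fin (m+1)) k) := by
    rw [hNv, h0]; rfl
  choose b hb using hX0
  have hN'eq : finSuccEquiv k m Nv = ∏ σ : G, (Polynomial.X + Polynomial.C (b σ)) := by
    rw [hNvdef, map_prod]
    exact Finset.prod_congr rfl fun σ _ => hb σ
  have hN'mon : (finSuccEquiv k m Nv).Monic := by
    rw [hN'eq]
    exact Polynomial.monic_prod_of_monic _ _ fun σ _ => Polynomial.monic_X_add_C _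
  have hN'deg : (finSuccEquiv k m Nv).degree = (Fintype.card G : WithBot ℕ) := by
    have hnat : (finSuccEquiv k m Nv).natDegree = Fintype.card G := by
      rw [hN'eq, Polynomial.natDegree_prod_of_monic _ _ fun σ _ => Polynomial.monic_X_add_C _]
      simp [Polynomial.natDegree_X_add_C]
    rw [Polynomial.degree_eq_natDegree hN'mon.ne_zero, hnat]
  -- uniqueness of division by the norm
  have huniq : ∀ u₁ r₁ u₂ r₂ : MvPolynomial (Fin (m+1)) k,
      (finSuccEquiv k m r₁).degree < (Fintype.card G : WithBot ℕ) →
      (finSuccEquiv k m r₂).degree < (Fintype.card G : WithBot ℕ) →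
      Nv * u₁ + r₁ = Nv * u₂ + r₂ → u₁ = u₂ ∧ r₁ = r₂ := by
    intro u₁ r₁ u₂ r₂ hd1 hd2 heq
    have h5 : u₁ = u₂ := by
      by_contra hne
      have h6 : Nv * (u₁ - u₂) = r₂ - r₁ := by linear_combination heq
      have h7 : finSuccEquiv k m (u₁ - u₂) ≠ 0 := by
        intro hz
        exact hne (sub_eq_zero.mp ((finSuccEquiv k m).injective
          (hz.trans (map_zero (finSuccEquiv k m)).symm)))
      have h8 : (finSuccEquiv k m (Nv * (u₁ - u₂))).degree
          = (finSuccEquiv k m (u₁ - u₂)).degree + (finSuccEquiv k m Nv).degree := by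
        rw [map_mul, mul_comm, Polynomial.Monic.degree_mul hN'mon]
      have h9 : ((Fintype.card G : WithBot ℕ))
          ≤ (finSuccEquiv k m (Nv * (u₁ - u₂))).degree := by
        rw [h8, hN'deg]
        calc (Fintype.card G : WithBot ℕ) = 0 + (Fintype.card G : WithBot ℕ) :=
              (zero_add _).symm
          _ ≤ _ + (Fintype.card G : WithBot ℕ) :=
              add_le_add (Polynomial.zero_le_degree_iff.mpr h7) le_rfl
      rw [h6] at h9
      have h10 : (finSuccEquiv k m (r₂ - r₁)).degree < (Fintype.card G : WithBot ℕ) := by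
        rw [map_sub]
        exact lt_of_le_of_lt (Polynomial.degree_sub_le _ _) (max_lt hd2 hd1)
      exact absurd h9 (not_le.mpr h10)
    subst h5
    exact ⟨rfl, add_left_cancel heq⟩
  -- division by the norm
  have hdiv : ∀ h : MvPolynomial (Fin (m+1)) k, ∃ u r : MvPolynomial (Fin (m+1)) k,
      h = Nv * u + r ∧ (finSuccEquiv k m r).degree < (Fintype.card G : WithBot ℕ) ∧
      (∀ g : G, g • h = h → g • u = u ∧ g • r = r) := by
    intro h
    obtain ⟨u, hu⟩ : ∃ u, finSuccEquiv k m u = finSuccEquiv k m h /ₘ finSuccEquiv k m Nv :=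
      ⟨(finSuccEquiv k m).symm _, AlgEquiv.apply_symm_apply _ _⟩
    obtain ⟨r, hr⟩ : ∃ r, finSuccEquiv k m r = finSuccEquiv k m h %ₘ finSuccEquiv k m Nv :=
      ⟨(finSuccEquiv k m).symm _, AlgEquiv.apply_symm_apply _ _⟩
    have heq : h = Nv * u + r := by
      apply (finSuccEquiv k m).injective
      rw [map_add, map_mul, hu, hr]
      exact ((Polynomial.modByMonic_add_div (finSuccEquiv k m h) (finSuccEquiv k m Nv)).symm.trans
        (add_comm _ _))
    have hdeg : (finSuccEquiv k m r).degree < (Fintype.card G : WithBot ℕ) := by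
      rw [hr, ← hN'deg]
      exact Polynomial.degree_modByMonic_lt _ hN'mon
    refine ⟨u, r, heq, hdeg, fun g hg => ?_⟩
    have e1 : Nv * (g • u) + g • r = Nv * u + r := by
      calc Nv * (g • u) + g • r = g • (Nv * u + r) := by
            rw [smul_add, smul_mul', hNinv g]
        _ = g • h := by rw [← heq]
        _ = h := hg
        _ = Nv * u + r := heq
    exact huniq (g • u) (g • r) u r (lt_of_le_of_lt (hdegle g r) hdeg) hdeg e1
  -- the generating set of the transfer ideal
  set S : Set ↥(invSub G (MvPolynomial (Fin (m+1)) k) ⊤) :=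
    {y | ∃ X ∈ 𝓧, ∃ f : MvPolynomial (Fin (m+1)) k, (∀ x : X, (x : G) • f = f) ∧
      (y : MvPolynomial (Fin (m+1)) k) = relTransfer G (MvPolynomial (Fin (m+1)) k) ⊤ X f}
    with hS
  have hspan : transferIdealFamily G (MvPolynomial (Fin (m+1)) k) 𝓧 = Ideal.span S := rfl
  have hSmul : ∀ (c y : ↥(invSub G (MvPolynomial (Fin (m+1)) k) ⊤)), y ∈ S → c * y ∈ S := by
    rintro c y ⟨X, hX, f, hf, hy⟩
    refine ⟨X, hX, (c : MvPolynomial (Fin (m+1)) k) * f, fun x => ?_, ?_⟩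
    · rw [smul_mul', c.2 ⟨(x : G), Subgroup.mem_top _⟩, hf x]
    · rw [Subring.coe_mul, hy]
      exact (relTransfer_mul_invariant X _ f fun g => c.2 ⟨g, Subgroup.mem_top g⟩).symm
  -- the ideal is contained in the additive closure of the generators
  have hIleJ : ∀ y, y ∈ transferIdealFamily G (MvPolynomial (Fin (m+1)) k) 𝓧 →
      y ∈ AddSubmonoid.closure S := by
    have hJ : ∃ J : Ideal ↥(invSub G (MvPolynomial (Fin (m+1)) k) ⊤),
        (J : Set ↥(invSub G (MvPolynomial (Fin (m+1)) k) ⊤)) = ↑(AddSubmonoid.closure S) := by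
      refine ⟨{ carrier := AddSubmonoid.closure S,
                add_mem' := fun ha hb => AddSubmonoid.add_mem _ ha hb,
                zero_mem' := AddSubmonoid.zero_mem _,
                smul_mem' := fun c y hy => ?_ }, rfl⟩
      simp only [smul_eq_mul]
      refine AddSubmonoid.closure_induction
        (fun z hz => AddSubmonoid.subset_closure (hSmul c z hz))
        (by rw [mul_zero]; exact AddSubmonoid.zero_mem _)
        (fun a b _ _ pa pb => by rw [mul_add]; exact AddSubmonoid.add_mem _ pa pb) hy
    obtain ⟨J, hJeq⟩ := hJ
    intro y hy
    rw [hspan] at hy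
    have : y ∈ (J : Set _) := Ideal.span_le.mpr
      (by rw [hJeq]; exact AddSubmonoid.subset_closure) hy
    rwa [hJeq] at this
  -- main structural result
  have Pmain : ∀ y : ↥(invSub G (MvPolynomial (Fin (m+1)) k) ⊤),
      y ∈ AddSubmonoid.closure S →
      ∃ z, z ∈ transferIdealFamily G (MvPolynomial (Fin (m+1)) k) 𝓧 ∧
        ∃ mm : MvPolynomial (Fin (m+1)) k,
          (finSuccEquiv k m mm).degree < (Fintype.card G : WithBot ℕ) ∧
          (y : MvPolynomial (Fin (m+1)) k)
            = Nv * (z : MvPolynomial (Fin (m+1)) k) + mm := by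
    intro y hy
    refine AddSubmonoid.closure_induction ?_ ?_ ?_ hy
    · rintro y₀ ⟨X, hX, h, hf, hy₀⟩
      obtain ⟨u, r, heq, hdeg, hinvar⟩ := hdiv h
      have huX : ∀ x : X, (x : G) • u = u := fun x => (hinvar (x : G) (hf x)).1
      refine ⟨⟨relTransfer G (MvPolynomial (Fin (m+1)) k) ⊤ X u,
          fun τ => relTransfer_smul_invariant X u huX (τ : G)⟩, ?_, ?_⟩
      · rw [hspan]
        exact Ideal.subset_span ⟨X, hX, u, huX, rfl⟩
      · refine ⟨relTransfer G (MvPolynomial (Fin (m+1)) k) ⊤ X r, ?_, ?_⟩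
        · exact relTransfer_degree_lt X r (Fintype.card G)
            fun g => lt_of_le_of_lt (hdegle g r) hdeg
        · rw [hy₀, heq, relTransfer_add, relTransfer_mul_invariant X Nv u hNinv]
    · exact ⟨0, Ideal.zero_mem _, 0, by
        rw [map_zero, Polynomial.degree_zero]; exact WithBot.bot_lt_coe _, by simp⟩
    · rintro y₁ y₂ _ _ ⟨z₁, hz₁, mm₁, hd₁, he₁⟩ ⟨z₂, hz₂, mm₂, hd₂, he₂⟩
      refine ⟨z₁ + z₂, Ideal.add_mem _ hz₁ hz₂, mm₁ + mm₂, ?_, ?_⟩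
      · rw [map_add]
        exact lt_of_le_of_lt (Polynomial.degree_add_le _ _) (max_lt hd₁ hd₂)
      · rw [Subring.coe_add, Subring.coe_add, he₁, he₂]
        ring
  -- conclusion
  rw [mem_nonZeroDivisors_iff_right]
  intro zq hzq
  obtain ⟨F, rfl⟩ := Ideal.Quotient.mk_surjective zq
  rw [← map_mul, Ideal.Quotient.eq_zero_iff_mem] at hzq
  obtain ⟨z, hzI, mm, hmmdeg, heq⟩ := Pmain _ (hIleJ _ hzq)
  rw [Subring.coe_mul] at heq
  have heq' : Nv * (F : MvPolynomial (Fin (m+1)) k) + 0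
      = Nv * (z : MvPolynomial (Fin (m+1)) k) + mm := by
    rw [add_zero, mul_comm]; exact heq
  have h0deg : (finSuccEquiv k m (0 : MvPolynomial (Fin (m+1)) k)).degree
      < (Fintype.card G : WithBot ℕ) := by
    rw [map_zero, Polynomial.degree_zero]; exact WithBot.bot_lt_coe _
  have hFz : F = z := Subtype.ext (huniq _ 0 _ mm h0deg hmmdeg heq').1
  rw [Ideal.Quotient.eq_zero_iff_mem, hFz]
  exact hzI
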